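/- Let f be an orientation-preserving homeomorphism of the circle T = R/Z whose rotation number ρ(f) is irrational, and assume that f is not topologically conjugate to a rotation. Then h_pol(f) = 1. -/

import Mathlib

open Filter Metric Set

variable {Z : Type*} [MetricSpace Z]

/-- The dynamical metric `d_n^f(x,y) = max_{0 ≤ k ≤ n-1} d(f^k x, f^k y)`. -/
noncomputable def dynDist (f : Z → Z) (n : ℕ) (x y : Z) : ℝ :=
  ((Finset.range n).sup fun k => nndist (f^[k] x) (f^[k] y) : NNReal)

/-- `G_n^f(Y,ε)`: the minimal number of balls of radius `ε` for the metric `d_n^f`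
needed to cover `Y`. -/
noncomputable def coverNum (f : Z → Z) (n : ℕ) (Y : Set Z) (ε : ℝ) : ℕ :=
  sInf {m : ℕ | ∃ s : Finset Z, s.card = m ∧
    Y ⊆ ⋃ c ∈ s, {y : Z | dynDist f n c y ≤ ε}}

/-- The polynomial entropy of `f` on `Y`:
`h_pol(f,Y) = lim_{ε→0} limsup_{n→∞} log G_n^f(Y,ε) / log n`
(realized, by antitonicity in `ε`, as the supremum over `ε > 0`). -/
noncomputable def hpolOn (f : Z → Z) (Y : Set Z) : EReal :=
  ⨆ ε : {e : ℝ // 0 < e}, Filter.atTop.limsup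
    (fun n : ℕ => ((Real.log (coverNum f n Y ε.1) / Real.log n : ℝ) : EReal))

/-- The polynomial entropy of `f`. -/
noncomputable def hpol (f : Z → Z) : EReal := hpolOn f Set.univ

lemma coverNum_eq (f : Z → Z) (n : ℕ) (Y : Set Z) (ε : ℝ) :
    coverNum f n Y ε = sInf {m : ℕ | ∃ s : Finset Z, s.card = m ∧
      Y ⊆ ⋃ c ∈ s, {y : Z | dynDist f n c y ≤ ε}} := rfl

/-- The circle `𝕋 = ℝ/ℤ`. -/
abbrev Circle1 : Type := AddCircle (1 : ℝ)

/-- `f` is topologically conjugate to a rotation of the circle. -/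
def ConjRotCircle (f : Circle1 ≃ₜ Circle1) : Prop :=
  ∃ (h : Circle1 ≃ₜ Circle1) (a : Circle1), ∀ x : Circle1, h (f (h.symm x)) = x + a



lemma dist_le_dynDist {f : Z → Z} {n k : ℕ} (hk : k < n) (x y : Z) :
    dist (f^[k] x) (f^[k] y) ≤ dynDist f n x y := by
  rw [dist_nndist, dynDist]
  exact_mod_cast Finset.le_sup (f := fun k => nndist (f^[k] x) (f^[k] y))
    (Finset.mem_range.2 hk)

lemma dynDist_le_of_forall {f : Z → Z} {n : ℕ} {x y : Z} {ε : ℝ} (hε : 0 ≤ ε)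
    (h : ∀ k, k < n → dist (f^[k] x) (f^[k] y) ≤ ε) : dynDist f n x y ≤ ε := by
  have h2 : ((Finset.range n).sup fun k => nndist (f^[k] x) (f^[k] y)) ≤ ε.toNNReal := by
    refine Finset.sup_le fun k hk => ?_
    rw [← NNReal.coe_le_coe, coe_nndist, Real.coe_toNNReal _ hε]
    exact h k (Finset.mem_range.1 hk)
  calc (_ : ℝ) ≤ (ε.toNNReal : ℝ) := NNReal.coe_le_coe.2 h2
  _ = ε := Real.coe_toNNReal _ hε

lemma dynDist_comm (f : Z → Z) (n : ℕ) (x y : Z) : dynDist f n x y = dynDist f n y x := by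
  simp [dynDist, nndist_comm]

lemma dynDist_triangle (f : Z → Z) (n : ℕ) (x y z : Z) :
    dynDist f n x z ≤ dynDist f n x y + dynDist f n y z := by
  rw [dynDist, dynDist, dynDist, ← NNReal.coe_add, NNReal.coe_le_coe]
  refine Finset.sup_le fun k hk => ?_
  exact (nndist_triangle _ _ _).trans (add_le_add
    (Finset.le_sup (f := fun k => nndist (f^[k] x) (f^[k] y)) hk)
    (Finset.le_sup (f := fun k => nndist (f^[k] y) (f^[k] z)) hk))

lemma round_min (x : ℝ) (m : ℤ) : |x - round x| ≤ |x - m| := by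
  rcases eq_or_ne m (round x) with rfl | hne
  · rfl
  · have h1 : |x - round x| ≤ 1 / 2 := abs_sub_round x
    have h2 : (1 : ℝ) ≤ |(m : ℝ) - round x| := by
      have : (1 : ℤ) ≤ |m - round x| := Int.one_le_abs (sub_ne_zero.2 hne)
      calc (1:ℝ) ≤ ((|m - round x| : ℤ) : ℝ) := by exact_mod_cast this
      _ = |(m : ℝ) - round x| := by push_cast; rfl
    have h3 : |(m:ℝ) - round x| ≤ |x - m| + |x - round x| := by
      have := abs_sub_abs_le_abs_sub ((m:ℝ) - round x) (x - round x)
      calc |(m:ℝ) - round x| = |((m:ℝ) - round x) - (x - round x) + (x - round x)| := by ring_nf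
      _ ≤ |((m:ℝ) - round x) - (x - round x)| + |x - round x| := abs_add_le _ _
      _ = |x - m| + |x - round x| := by rw [show ((m:ℝ) - round x) - (x - round x) = -(x - m) by ring, abs_neg]
    linarith

lemma circle_norm (x : ℝ) : ‖((x : ℝ) : Circle1)‖ = |x - round x| := by
  rw [AddCircle.norm_eq]; simp

lemma circle_dist_eq (u v : ℝ) :
    dist ((u : ℝ) : Circle1) ((v : ℝ) : Circle1) = |u - v - round (u - v)| := by
  rw [dist_eq_norm]
  rw [← QuotientAddGroup.mk_sub, circle_norm]

lemma circle_dist_le (u v : ℝ) : dist ((u : ℝ) : Circle1) ((v : ℝ) : Circle1) ≤ |u - v| := by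
  rw [circle_dist_eq]
  simpa using round_min (u - v) 0

lemma circle_dist_lt {u v δ : ℝ} (h : dist ((u : ℝ) : Circle1) ((v : ℝ) : Circle1) < δ) :
    ∃ k : ℤ, |u - v - k| < δ := ⟨round (u - v), by rwa [circle_dist_eq] at h⟩

lemma circle_coe_eq_zero {x : ℝ} : ((x : ℝ) : Circle1) = 0 ↔ ∃ k : ℤ, x = k := by
  rw [AddCircle.coe_eq_zero_iff]
  constructor
  · rintro ⟨k, hk⟩; exact ⟨k, by simpa using hk.symm⟩
  · rintro ⟨k, rfl⟩; exact ⟨k, by simp⟩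

lemma circle_coe_eq_coe {x y : ℝ} : ((x : ℝ) : Circle1) = ((y : ℝ) : Circle1) ↔ ∃ k : ℤ, x = y + k := by
  constructor
  · intro h
    have : ((x - y : ℝ) : Circle1) = 0 := by
      rw [QuotientAddGroup.mk_sub, h, sub_self]
    obtain ⟨k, hk⟩ := circle_coe_eq_zero.1 this
    exact ⟨k, by linarith⟩
  · rintro ⟨k, rfl⟩
    rw [QuotientAddGroup.mk_add, (circle_coe_eq_zero.2 ⟨k, rfl⟩ : ((k:ℝ):Circle1) = 0), add_zero]

lemma circle_ind {P : Circle1 → Prop} (h : ∀ x : ℝ, P ((x : ℝ) : Circle1)) : ∀ q, P q :=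
  fun q => QuotientAddGroup.induction_on q h

lemma map_add_int' {G : ℝ → ℝ} {c : ℝ} (hG : ∀ x, G (x + 1) = G x + c) (x : ℝ) (m : ℤ) :
    G (x + m) = G x + m * c := by
  induction m using Int.induction_on with
  | zero => simp
  | succ k ih =>
    have : x + ((k : ℤ) + 1 : ℤ) = (x + (k:ℤ)) + 1 := by push_cast; ring
    rw [this, hG, ih]; push_cast; ring
  | pred k ih =>
    have h2 : x + (-(k:ℤ) - 1 : ℤ) + 1 = x + (-(k:ℤ) : ℤ) := by push_cast; ring
    have := hG (x + (-(k:ℤ) - 1 : ℤ))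
    rw [h2, ih] at this
    push_cast
    push_cast at this
    linarith

lemma surj_of_add_period {G : ℝ → ℝ} {c : ℝ} (hc : Continuous G) (hm : Monotone G)
    (hG : ∀ x, G (x + 1) = G x + c) (hcpos : 0 < c) : Function.Surjective G := by
  intro y
  obtain ⟨m, hmc⟩ := Archimedean.arch (|y - G 0|) hcpos
  have hml : G 0 - m * c ≤ y ∧ y ≤ G 0 + m * c := by
    rw [nsmul_eq_mul] at hmc
    constructor <;> [linarith [neg_abs_le (y - G 0)]; linarith [le_abs_self (y - G 0)]]
  have hGm : G (m : ℝ) = G 0 + m * c := by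
    have h := map_add_int' hG 0 (m : ℤ); rw [zero_add] at h; exact_mod_cast h
  have hGm' : G (-(m : ℝ)) = G 0 - m * c := by
    have h := map_add_int' hG 0 (-(m : ℤ)); rw [zero_add] at h; push_cast at h; linarith
  have hsub : Set.Icc (G (-(m:ℝ))) (G (m:ℝ)) ⊆ G '' Set.Icc (-(m:ℝ)) ((m:ℝ)) :=
    intermediate_value_Icc (by linarith [Nat.cast_nonneg (α := ℝ) m]) hc.continuousOn
  have hmem : y ∈ Set.Icc (G (-(m:ℝ))) (G (m:ℝ)) := by
    rw [Set.mem_Icc, hGm, hGm']; exact hml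
  obtain ⟨x, _, hx⟩ := hsub hmem
  exact ⟨x, hx⟩
lemma lift_map_add_one (f : Circle1 ≃ₜ Circle1) (F : ℝ → ℝ) (hFcont : Continuous F)
    (hFmono : StrictMono F) (hFlift : ∀ x : ℝ, f ((x : ℝ) : Circle1) = ((F x : ℝ) : Circle1)) :
    ∀ x, F (x + 1) = F x + 1 := by
  set g : ℝ → ℝ := fun x => F (x + 1) - F x with hg
  have hgcont : Continuous g := (hFcont.comp (continuous_id.add continuous_const)).sub hFcont
  have key : ∀ x : ℝ, ∃ k : ℤ, g x = k := by
    intro x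
    have h1 : ((x + 1 : ℝ) : Circle1) = ((x : ℝ) : Circle1) := circle_coe_eq_coe.2 ⟨1, by push_cast; ring⟩
    have h2 : ((F (x + 1) : ℝ) : Circle1) = ((F x : ℝ) : Circle1) := by
      rw [← hFlift, ← hFlift, h1]
    obtain ⟨k, hk⟩ := circle_coe_eq_coe.1 h2
    exact ⟨k, by simp [hg]; linarith⟩
  have hconst : ∀ x, g x = g 0 := by
    have hclopen : IsClopen {x | g x = g 0} := by
      constructor
      · exact isClosed_eq hgcont continuous_const
      · rw [isOpen_iff_mem_nhds]
        intro x hx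
        refine Filter.mem_of_superset
          ((hgcont.continuousAt).preimage_mem_nhds (Metric.ball_mem_nhds (g x) one_pos)) ?_
        intro y hy
        obtain ⟨ky, hky⟩ := key y
        obtain ⟨kx, hkx⟩ := key x
        have : |(ky : ℝ) - kx| < 1 := by
          have := mem_ball.1 hy; rw [Real.dist_eq, hky, hkx] at this; exact this
        have : ky = kx := by
          have h3 : |ky - kx| < 1 := by exact_mod_cast (by push_cast; exact this : |((ky - kx : ℤ) : ℝ)| < 1)
          rcases abs_lt.1 h3 with ⟨hA, hB⟩; omega
        show g y = g 0
        rw [hky, this, ← hkx, hx]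
    intro x
    have := hclopen.eq_univ ⟨0, rfl⟩ (α := ℝ)
    exact (Set.eq_univ_iff_forall.1 this x :)
  obtain ⟨d, hd⟩ := key 0
  have hdpos : (1 : ℤ) ≤ d := by
    have h0 : (0 : ℝ) < d := by rw [← hd]; simpa [hg] using hFmono (by linarith : (0:ℝ) < 0 + 1)
    have : (0 : ℤ) < d := by exact_mod_cast h0
    omega
  have hd1 : d = 1 := by
    by_contra hne
    have hd2 : (2 : ℤ) ≤ d := by omega
    have hF1 : F 1 = F 0 + d := by
      have := hd; simp only [hg, zero_add] at this; linarith
    have hsub : Set.Icc (F 0) (F 1) ⊆ F '' Set.Icc 0 1 :=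
      intermediate_value_Icc zero_le_one hFcont.continuousOn
    have hmem : F 0 + 1 ∈ Set.Icc (F 0) (F 1) := by
      constructor
      · linarith
      · rw [hF1]; have : (2:ℝ) ≤ d := by exact_mod_cast hd2
        linarith
    obtain ⟨y, hy, hFy⟩ := hsub hmem
    have h4 : ((F y : ℝ) : Circle1) = ((F 0 : ℝ) : Circle1) := by
      rw [hFy]; exact circle_coe_eq_coe.2 ⟨1, by push_cast; ring⟩
    have h5 : ((y : ℝ) : Circle1) = ((0 : ℝ) : Circle1) := by
      apply f.injective
      rw [hFlift, hFlift, h4]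
    obtain ⟨k, hk⟩ := circle_coe_eq_coe.1 h5
    rw [zero_add] at hk
    have hk0 : (0 : ℝ) ≤ k := by rw [← hk]; exact hy.1
    have hk1 : (k : ℝ) ≤ 1 := by rw [← hk]; exact hy.2
    have : k = 0 ∨ k = 1 := by
      have h0 : (0:ℤ) ≤ k := by exact_mod_cast hk0
      have h1 : k ≤ 1 := by exact_mod_cast hk1
      omega
    rcases this with rfl | rfl
    · simp at hk; rw [hk] at hFy; linarith
    · simp at hk; rw [hk] at hFy
      rw [hF1] at hFy
      have : (2:ℝ) ≤ d := by exact_mod_cast hd2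
      linarith
  intro x
  have := hconst x
  rw [hd, hd1] at this
  simp only [hg] at this
  push_cast at this
  linarith

lemma circleLift_coe {G : ℝ → ℝ} (hG : ∀ x, G (x + 1) = G x + 1) (x : ℝ) :
    AddCircle.liftIco 1 0 (fun t => ((G t : ℝ) : Circle1)) ((x : ℝ) : Circle1)
      = ((G x : ℝ) : Circle1) := by
  have hy : Int.fract x ∈ Set.Ico (0 : ℝ) (0 + 1) := by
    simpa using And.intro (Int.fract_nonneg x) (Int.fract_lt_one x)
  have hxy : ((x : ℝ) : Circle1) = ((Int.fract x : ℝ) : Circle1) :=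
    circle_coe_eq_coe.2 ⟨⌊x⌋, by rw [Int.fract]; ring⟩
  rw [hxy, AddCircle.liftIco_coe_apply hy]
  refine circle_coe_eq_coe.2 ⟨-⌊x⌋, ?_⟩
  have h := map_add_int' (c := 1) hG (Int.fract x) ⌊x⌋
  rw [mul_one] at h
  have h2 : Int.fract x + (⌊x⌋ : ℝ) = x := by rw [Int.fract]; ring
  rw [h2] at h
  push_cast
  linarith

lemma irr_int_mul_ne {ρ : ℝ} (h : Irrational ρ) {m : ℤ} (hm : m ≠ 0) (k : ℤ) :
    (m : ℝ) * ρ ≠ k := (h.intCast_mul hm).ne_int k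

lemma exists_sep (f : Circle1 ≃ₜ Circle1) (F : ℝ → ℝ) (hFcont : Continuous F)
    (hFmono : StrictMono F)
    (hFlift : ∀ x : ℝ, f ((x : ℝ) : Circle1) = ((F x : ℝ) : Circle1))
    (hF1 : ∀ x, F (x + 1) = F x + 1)
    (FU : CircleDeg1Liftˣ) (hFU : ⇑(FU : CircleDeg1Lift) = F)
    (ρ : ℝ) (hρ0 : Filter.Tendsto (fun n : ℕ => F^[n] 0 / n) Filter.atTop (nhds ρ))
    (hρnat : Irrational ρ) (hnconj : ¬ ConjRotCircle f) :
    ∃ x₀ δ : ℝ, 0 < δ ∧ ∀ m : ℤ, m ≠ 0 →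
      δ ≤ dist ((x₀ : ℝ) : Circle1)
        (((((FU ^ m : CircleDeg1Liftˣ) : CircleDeg1Lift) x₀ : ℝ)) : Circle1) := by
  classical
  set Fhat : CircleDeg1Lift := (FU : CircleDeg1Lift) with hFhatdef
  -- translation number of Fhat is ρ
  have hτ : Fhat.translationNumber = ρ := by
    refine tendsto_nhds_unique Fhat.tendsto_translation_number₀ ?_
    have hcongr : (fun n : ℕ => ((Fhat ^ n) 0 : ℝ) / n) = fun n : ℕ => F^[n] 0 / n := by
      funext n; rw [CircleDeg1Lift.coe_pow, hFU]
    rw [hcongr]; exact hρ0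
  -- semiconjugacy H
  obtain ⟨H, hH⟩ := CircleDeg1Lift.semiconj_of_isUnit_of_translationNumber_eq
    (f₁ := Fhat) (f₂ := (CircleDeg1Lift.translate (Multiplicative.ofAdd ρ) : CircleDeg1Liftˣ))
    FU.isUnit (CircleDeg1Lift.translate (Multiplicative.ofAdd ρ)).isUnit
    (by rw [hτ, CircleDeg1Lift.translationNumber_translate])
  have hsemi : ∀ x, H (F x) = ρ + H x := by
    intro x
    have := hH x
    rw [hFU] at this
    simpa using this
  have hFbij : Function.Bijective F := by
    rw [← hFU]; exact CircleDeg1Lift.isUnit_iff_bijective.1 FU.isUnit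
  -- membership helpers for the closure of the range of H
  set R : Set ℝ := closure (Set.range ⇑H) with hRdef
  have hRclosed : IsClosed R := isClosed_closure
  have hmemH : ∀ y, H y ∈ R := fun y => subset_closure ⟨y, rfl⟩
  have hinv : ∀ c : ℝ, ((fun y => y + c) '' Set.range ⇑H ⊆ Set.range ⇑H) →
      ∀ x ∈ R, x + c ∈ R := by
    intro c hsub x hx
    have himg := (Homeomorph.addRight c).image_closure (Set.range ⇑H)
    have hx2 : x + c ∈ (Homeomorph.addRight c) '' R := ⟨x, hx, rfl⟩
    rw [himg] at hx2
    have hsub' : ⇑(Homeomorph.addRight c) '' Set.range ⇑H ⊆ Set.range ⇑H := by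
      simpa using hsub
    exact closure_mono hsub' hx2
  have r1 : ∀ k : ℤ, ∀ x ∈ R, x + (k : ℝ) ∈ R := by
    intro k
    refine hinv _ ?_
    rintro _ ⟨_, ⟨y, rfl⟩, rfl⟩
    exact ⟨y + k, H.map_add_int y k⟩
  have r2 : ∀ x ∈ R, x + ρ ∈ R := by
    refine hinv _ ?_
    rintro _ ⟨_, ⟨y, rfl⟩, rfl⟩
    exact ⟨F y, by rw [hsemi]; ring⟩
  have r3 : ∀ x ∈ R, x + -ρ ∈ R := by
    refine hinv _ ?_
    rintro _ ⟨_, ⟨y, rfl⟩, rfl⟩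
    obtain ⟨w, rfl⟩ := hFbij.2 y
    exact ⟨w, by rw [hsemi]; ring⟩
  have rz : ∀ n : ℤ, ∀ x ∈ R, x + n * ρ ∈ R := by
    intro n
    induction n using Int.induction_on with
    | zero => intro x hx; simpa using hx
    | succ k ih =>
      intro x hx
      have h := r2 _ (ih x hx)
      refine Set.mem_of_eq_of_mem ?_ h
      push_cast
      ring
    | pred k ih =>
      intro x hx
      have h := r3 _ (ih x hx)
      refine Set.mem_of_eq_of_mem ?_ h
      push_cast
      ring
  have rt : ∀ (n m : ℤ), ∀ x ∈ R, x + n * ρ + (m : ℝ) ∈ R := fun n m x hx =>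
    r1 m _ (rz n x hx)
  -- Density of the range of H
  have hdense : Dense (Set.range ⇑H) := by
    by_contra hnd
    obtain ⟨x₀, hx₀⟩ : ∃ x, x ∉ R := by
      by_contra hc
      push_neg at hc
      exact hnd fun x => hc x
    set A : Set ℝ := R ∩ Set.Iic x₀ with hAdef
    set B : Set ℝ := R ∩ Set.Ici x₀ with hBdef
    have hmemA : H 0 + (⌊x₀ - H 0⌋ : ℝ) ∈ A :=
      ⟨r1 _ _ (hmemH 0), by simp only [Set.mem_Iic]; linarith [Int.floor_le (x₀ - H 0)]⟩
    have hAne : A.Nonempty := ⟨_, hmemA⟩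
    have hAbdd : BddAbove A := ⟨x₀, fun t ht => ht.2⟩
    set a : ℝ := sSup A with hadef
    have haA : a ∈ A := (hRclosed.inter isClosed_Iic).csSup_mem hAne hAbdd
    have haR : a ∈ R := haA.1
    have ha_lt : a < x₀ := haA.2.lt_of_ne fun h => hx₀ (h ▸ haR)
    have ha_gt : x₀ - 1 < a := by
      have h1 : H 0 + (⌊x₀ - H 0⌋ : ℝ) ≤ a := le_csSup hAbdd hmemA
      have := Int.sub_one_lt_floor (x₀ - H 0)
      linarith
    have hmemB : H 0 + (⌈x₀ - H 0⌉ : ℝ) ∈ B :=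
      ⟨r1 _ _ (hmemH 0), by simp only [Set.mem_Ici]; linarith [Int.le_ceil (x₀ - H 0)]⟩
    have hBne : B.Nonempty := ⟨_, hmemB⟩
    have hBbdd : BddBelow B := ⟨x₀, fun t ht => ht.2⟩
    set b : ℝ := sInf B with hbdef
    have hbB : b ∈ B := (hRclosed.inter isClosed_Ici).csInf_mem hBne hBbdd
    have hbR : b ∈ R := hbB.1
    have hb_gt : x₀ < b := hbB.2.lt_of_ne' fun h => hx₀ (h ▸ hbR)
    have hb_lt : b < x₀ + 1 := by
      have h1 : b ≤ H 0 + (⌈x₀ - H 0⌉ : ℝ) := csInf_le hBbdd hmemB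
      have := Int.ceil_lt_add_one (x₀ - H 0)
      linarith
    have hab : a < b := ha_lt.trans hb_gt
    set L : ℝ := b - a with hLdef
    have hLpos : 0 < L := by simp only [hLdef]; linarith
    have hL2 : L < 2 := by simp only [hLdef]; linarith
    have gap : ∀ y, a < y → y < b → y ∉ R := by
      intro y hay hyb hyR
      rcases le_or_gt y x₀ with h | h
      · exact absurd (le_csSup hAbdd ⟨hyR, h⟩) (not_le.2 hay)
      · exact absurd (csInf_le hBbdd ⟨hyR, h.le⟩) (not_le.2 hyb)
    -- translated gaps
    set t : ℕ → ℝ := fun n => (n : ℝ) * ρ + ((-⌊a + (n : ℝ) * ρ⌋ : ℤ) : ℝ) with htdef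
    have hmem_t : ∀ n : ℕ, a + t n ∈ R := by
      intro n
      have h := rt (n : ℤ) (-⌊a + (n : ℝ) * ρ⌋) a haR
      refine Set.mem_of_eq_of_mem ?_ h
      simp only [htdef]
      push_cast
      ring
    have hgap_t : ∀ n : ℕ, ∀ y ∈ Set.Ioo (a + t n) (b + t n), y ∉ R := by
      intro n y hy hyR
      have h2 := rt (-(n : ℤ)) (⌊a + (n : ℝ) * ρ⌋) y hyR
      have h3 : y - t n ∈ R := by
        refine Set.mem_of_eq_of_mem ?_ h2
        simp only [htdef]
        push_cast
        ring
      exact gap (y - t n) (by have := hy.1; linarith) (by have := hy.2; linarith) h3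
    have ht_fract : ∀ n : ℕ, a + t n = Int.fract (a + (n : ℝ) * ρ) := by
      intro n
      simp only [htdef, Int.fract]
      push_cast
      ring
    have ht_ne : ∀ n n' : ℕ, n ≠ n' → t n ≠ t n' := by
      intro n n' hne heq
      have h2 : ((n : ℤ) - n' : ℤ) ≠ 0 := by
        intro hc; apply hne; omega
      refine irr_int_mul_ne hρnat h2 (⌊a + (n : ℝ) * ρ⌋ - ⌊a + (n' : ℝ) * ρ⌋) ?_
      simp only [htdef] at heq
      push_cast at heq ⊢
      linarith

    -- pairwise disjointness
    have hdisj : ∀ n n' : ℕ, t n < t n' →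
        Disjoint (Set.Ioo (a + t n) (b + t n)) (Set.Ioo (a + t n') (b + t n')) := by
      intro n n' hlt
      rw [Set.disjoint_left]
      intro y hy1 hy2
      have : a + t n' ∈ Set.Ioo (a + t n) (b + t n) := by
        constructor
        · linarith
        · have := hy1.2; have := hy2.1; linarith
      exact hgap_t n _ this (hmem_t n')
    -- measure contradiction
    obtain ⟨N, hN⟩ := exists_nat_gt (3 / L)
    have hNL : 3 < N * L := by
      rw [div_lt_iff₀ hLpos] at hN
      linarith
    have hsubIcc : ∀ n : ℕ, Set.Ioo (a + t n) (b + t n) ⊆ Set.Icc (0 : ℝ) 3 := by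
      intro n y hy
      have hf1 : (0 : ℝ) ≤ Int.fract (a + (n : ℝ) * ρ) := Int.fract_nonneg _
      have hf2 : Int.fract (a + (n : ℝ) * ρ) < 1 := Int.fract_lt_one _
      have he := ht_fract n
      have hy1 := hy.1
      have hy2 := hy.2
      constructor
      · linarith
      · have : b + t n = a + t n + L := by simp only [hLdef]; ring
        rw [this] at hy2
        rw [he] at hy2
        linarith
    have hpd : Set.PairwiseDisjoint (↑(Finset.range N) : Set ℕ)
        (fun n => Set.Ioo (a + t n) (b + t n)) := by
      intro i _ j _ hij
      rcases lt_or_gt_of_ne (ht_ne i j hij) with h | h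
      · exact hdisj i j h
      · exact (hdisj j i h).symm
    have hvol := MeasureTheory.measure_biUnion_finset (μ := MeasureTheory.volume) hpd
      (fun n _ => measurableSet_Ioo)
    have hvol2 : ∀ n : ℕ, MeasureTheory.volume (Set.Ioo (a + t n) (b + t n))
        = ENNReal.ofReal L := by
      intro n
      rw [Real.volume_Ioo]
      congr 1
      simp only [hLdef]; ring
    have hle : MeasureTheory.volume (⋃ n ∈ Finset.range N, Set.Ioo (a + t n) (b + t n))
        ≤ MeasureTheory.volume (Set.Icc (0 : ℝ) 3) := by
      refine MeasureTheory.measure_mono ?_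
      refine Set.iUnion₂_subset fun n _ => hsubIcc n
    rw [hvol] at hle
    simp only [hvol2, Finset.sum_const, Finset.card_range, nsmul_eq_mul] at hle
    rw [Real.volume_Icc] at hle
    have h3 : (N : ENNReal) * ENNReal.ofReal L = ENNReal.ofReal ((N : ℝ) * L) := by
      rw [ENNReal.ofReal_mul (Nat.cast_nonneg N), ENNReal.ofReal_natCast]
    rw [h3] at hle
    have h4 : (N : ℝ) * L ≤ 3 - 0 := (ENNReal.ofReal_le_ofReal_iff (by norm_num)).1 hle
    linarith
  -- H is continuous and surjective
  have hHcont : Continuous ⇑H := H.monotone.continuous_of_denseRange hdense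
  have hHsurj : Function.Surjective ⇑H :=
    surj_of_add_period hHcont H.monotone H.map_add_one one_pos
  -- semiconjugacy along powers
  have hnatsemi : ∀ (n : ℕ) (x : ℝ), H (((FU : CircleDeg1Lift) ^ n) x) = H x + n * ρ := by
    intro n
    induction n with
    | zero => intro x; simp
    | succ k ih =>
      intro x
      have h1 : ((FU : CircleDeg1Lift) ^ (k + 1)) x = ((FU : CircleDeg1Lift) ^ k) (F x) := by
        rw [pow_succ, CircleDeg1Lift.mul_apply, hFU]
      rw [h1, ih, hsemi]
      push_cast
      ring
  have hz : ∀ (m : ℤ) (x : ℝ),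
      H (((FU ^ m : CircleDeg1Liftˣ) : CircleDeg1Lift) x) = H x + m * ρ := by
    intro m x
    rcases le_or_gt 0 m with hm | hm
    · obtain ⟨n, rfl⟩ := Int.eq_ofNat_of_zero_le hm
      have hcast : ((FU ^ (n : ℤ) : CircleDeg1Liftˣ) : CircleDeg1Lift)
          = (FU : CircleDeg1Lift) ^ n := by
        rw [zpow_natCast, Units.val_pow_eq_pow_val]
      rw [hcast, hnatsemi]
      push_cast
      ring
    · obtain ⟨n, hn, rfl⟩ : ∃ n : ℕ, 0 < n ∧ m = -(n : ℤ) :=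
        ⟨m.natAbs, by omega, by omega⟩
      set y := ((FU ^ (-(n : ℤ)) : CircleDeg1Liftˣ) : CircleDeg1Lift) x with hy
      have hmul : (FU ^ (n : ℤ)) * (FU ^ (-(n : ℤ))) = 1 := by
        rw [← zpow_add]
        norm_num
      have hxy : ((FU : CircleDeg1Lift) ^ n) y = x := by
        have h2 : ((FU ^ (n : ℤ) : CircleDeg1Liftˣ) : CircleDeg1Lift) y = x := by
          rw [hy, ← CircleDeg1Lift.mul_apply, ← Units.val_mul, hmul]
          simp
        rw [← h2, zpow_natCast, Units.val_pow_eq_pow_val]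
      have h3 := hnatsemi n y
      rw [hxy] at h3
      push_cast
      linarith
  by_cases hinj : Function.Injective ⇑H
  · exfalso
    apply hnconj
    have Hsm : StrictMono ⇑H := H.monotone.strictMono_of_injective hinj
    set HO := StrictMono.orderIsoOfSurjective ⇑H Hsm hHsurj with hHOdef
    have hHOcoe : ∀ x, HO x = H x := fun x =>
      congrFun (StrictMono.coe_orderIsoOfSurjective ⇑H Hsm hHsurj) x
    set K : ℝ → ℝ := ⇑HO.symm with hKdef
    have hKH : ∀ x, K (H x) = x := fun x => by
      rw [hKdef, ← hHOcoe]
      exact HO.symm_apply_apply x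
    have hHK : ∀ y, H (K y) = y := fun y => by
      rw [← hHOcoe]
      exact HO.apply_symm_apply y
    have hK1 : ∀ y, K (y + 1) = K y + 1 := by
      intro y
      apply hinj
      rw [hHK, H.map_add_one, hHK]
    have hKcont : Continuous K := HO.symm.continuous
    have hprojcont : Continuous (fun t : ℝ => ((t : ℝ) : Circle1)) := by
      exact AddCircle.continuous_mk' 1
    set hf : Circle1 → Circle1 := AddCircle.liftIco 1 0 (fun t => ((H t : ℝ) : Circle1)) with hhf
    set hg : Circle1 → Circle1 := AddCircle.liftIco 1 0 (fun t => ((K t : ℝ) : Circle1)) with hhg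
    have hfc : ∀ x : ℝ, hf ((x : ℝ) : Circle1) = ((H x : ℝ) : Circle1) :=
      circleLift_coe H.map_add_one
    have hgc : ∀ x : ℝ, hg ((x : ℝ) : Circle1) = ((K x : ℝ) : Circle1) :=
      circleLift_coe hK1
    have hfcont : Continuous hf := by
      refine AddCircle.liftIco_continuous ?_ (hprojcont.comp hHcont).continuousOn
      show ((H 0 : ℝ) : Circle1) = ((H (0 + 1) : ℝ) : Circle1)
      refine circle_coe_eq_coe.2 ⟨-1, ?_⟩
      rw [H.map_add_one]
      push_cast
      ring
    have hgcont : Continuous hg := by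
      refine AddCircle.liftIco_continuous ?_ (hprojcont.comp hKcont).continuousOn
      show ((K 0 : ℝ) : Circle1) = ((K (0 + 1) : ℝ) : Circle1)
      refine circle_coe_eq_coe.2 ⟨-1, ?_⟩
      rw [hK1]
      push_cast
      ring
    set e : Circle1 ≃ₜ Circle1 :=
      { toFun := hf
        invFun := hg
        left_inv := circle_ind fun x => by rw [hfc, hgc, hKH]
        right_inv := circle_ind fun y => by rw [hgc, hfc, hHK]
        continuous_toFun := hfcont
        continuous_invFun := hgcont } with hedef
    have hecoe : ⇑e = hf := rfl
    refine ⟨e, ((ρ : ℝ) : Circle1), ?_⟩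
    have key : ∀ q : Circle1, e (f q) = e q + ((ρ : ℝ) : Circle1) := by
      refine circle_ind fun x => ?_
      rw [hecoe, hFlift, hfc, hfc, hsemi]
      rw [show (ρ + H x : ℝ) = (H x + ρ : ℝ) by ring]
      exact QuotientAddGroup.mk_add (AddSubgroup.zmultiples (1:ℝ)) (H x) ρ
    intro q
    have h1 := key (e.symm q)
    rw [e.apply_symm_apply] at h1
    exact h1
  · rw [Function.not_injective_iff] at hinj
    obtain ⟨p, q, hpq, hne⟩ := hinj
    set a := min p q with hadef
    set b := max p q with hbdef
    have hab : a < b := by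
      rcases hne.lt_or_gt with h | h
      · rw [hadef, hbdef, min_eq_left h.le, max_eq_right h.le]; exact h
      · rw [hadef, hbdef, min_eq_right h.le, max_eq_left h.le]; exact h
    have hHab : H a = H b := by
      rcases le_total p q with h | h
      · rw [hadef, hbdef, min_eq_left h, max_eq_right h]; exact hpq
      · rw [hadef, hbdef, min_eq_right h, max_eq_left h]; exact hpq.symm
    have hconst : ∀ t, a ≤ t → t ≤ b → H t = H a := fun t h1 h2 =>
      le_antisymm (hHab ▸ H.mono h2) (H.mono h1)
    refine ⟨(a + b) / 2, (b - a) / 2, by linarith, ?_⟩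
    intro m hm
    by_contra hlt
    push_neg at hlt
    obtain ⟨k, hk⟩ := circle_dist_lt hlt
    set y := ((FU ^ m : CircleDeg1Liftˣ) : CircleDeg1Lift) ((a + b) / 2) with hydef
    have habs := abs_lt.1 hk
    have hu1 : a ≤ y + (k : ℝ) := by
      have := habs.2
      linarith
    have hu2 : y + (k : ℝ) ≤ b := by
      have := habs.1
      linarith
    have hHy : H (y + (k : ℝ)) = H ((a + b) / 2) + m * ρ + k := by
      rw [H.map_add_int, hz]
    have e1 : H (y + (k : ℝ)) = H a := hconst _ hu1 hu2
    have e2 : H ((a + b) / 2) = H a := hconst _ (by linarith) (by linarith)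
    refine irr_int_mul_ne hρnat hm (-k) ?_
    rw [e1, e2] at hHy
    push_cast
    linarith


lemma iter_lift (f : Circle1 ≃ₜ Circle1) (F : ℝ → ℝ)
    (hFlift : ∀ x : ℝ, f ((x : ℝ) : Circle1) = ((F x : ℝ) : Circle1)) :
    ∀ (k : ℕ) (x : ℝ), (⇑f)^[k] ((x : ℝ) : Circle1) = ((F^[k] x : ℝ) : Circle1) := by
  intro k
  induction k with
  | zero => intro x; simp
  | succ j ih =>
    intro x
    rw [Function.iterate_succ_apply, Function.iterate_succ_apply, hFlift, ih]

lemma exists_cover (f : Circle1 ≃ₜ Circle1) (F : ℝ → ℝ) (hFcont : Continuous F)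
    (hFmono : StrictMono F)
    (hFlift : ∀ x : ℝ, f ((x : ℝ) : Circle1) = ((F x : ℝ) : Circle1))
    (hF1 : ∀ x, F (x + 1) = F x + 1)
    {n : ℕ} (hn : 1 ≤ n) {ε : ℝ} (hε : 0 < ε) :
    ∃ s : Finset Circle1, s.card ≤ ⌈(n : ℝ) / ε⌉₊ + 1 ∧
      Set.univ ⊆ ⋃ c ∈ s, {y : Circle1 | dynDist ⇑f n c y ≤ ε} := by
  classical
  set Φ : ℝ → ℝ := fun u => ∑ k ∈ Finset.range n, F^[k] u with hΦdef
  have hFk1 : ∀ (k : ℕ) (x : ℝ), F^[k] (x + 1) = F^[k] x + 1 := by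
    intro k
    induction k with
    | zero => intro x; simp
    | succ j ih =>
      intro x
      rw [Function.iterate_succ_apply', Function.iterate_succ_apply', ih, hF1]
  have hΦcont : Continuous Φ := by
    refine continuous_finset_sum _ fun k _ => hFcont.iterate k
  have hΦmono : StrictMono Φ := by
    intro x y hxy
    exact Finset.sum_lt_sum_of_nonempty (Finset.nonempty_range_iff.2 (by omega))
      fun k _ => (hFmono.iterate k) hxy
  have hΦ1 : ∀ u, Φ (u + 1) = Φ u + n := by
    intro u
    calc Φ (u + 1) = ∑ k ∈ Finset.range n, (F^[k] u + 1) :=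
          Finset.sum_congr rfl fun k _ => hFk1 k u
    _ = Φ u + n := by rw [Finset.sum_add_distrib]; simp [hΦdef]
  have hnpos : (0 : ℝ) < n := by exact_mod_cast hn
  have hΦsurj : Function.Surjective Φ :=
    surj_of_add_period hΦcont hΦmono.monotone hΦ1 hnpos
  set ΦO := StrictMono.orderIsoOfSurjective Φ hΦmono hΦsurj with hΦOdef
  have hΦOcoe : ∀ x, ΦO x = Φ x := fun x =>
    congrFun (StrictMono.coe_orderIsoOfSurjective Φ hΦmono hΦsurj) x
  set t : ℕ → ℝ := fun i => ΦO.symm (Φ 0 + i * ε) with htdef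
  have ht : ∀ i : ℕ, Φ (t i) = Φ 0 + i * ε := fun i => by
    rw [htdef]; simp only; rw [← hΦOcoe]; exact ΦO.apply_symm_apply _
  set M := ⌈(n : ℝ) / ε⌉₊ with hMdef
  set s : Finset Circle1 := (Finset.range (M + 1)).image (fun i => ((t i : ℝ) : Circle1))
    with hsdef
  refine ⟨s, Finset.card_image_le.trans (by simp), ?_⟩
  rintro q -
  refine circle_ind (P := fun q => q ∈ ⋃ c ∈ s, {y | dynDist ⇑f n c y ≤ ε}) ?_ q
  intro x
  set y := Int.fract x with hydef
  have hxy : ((x : ℝ) : Circle1) = ((y : ℝ) : Circle1) :=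
    circle_coe_eq_coe.2 ⟨⌊x⌋, by rw [hydef, Int.fract]; ring⟩
  have hy0 : 0 ≤ y := Int.fract_nonneg x
  have hy1 : y ≤ 1 := (Int.fract_lt_one x).le
  have hΦlb : Φ 0 ≤ Φ y := hΦmono.monotone hy0
  have hΦub : Φ y ≤ Φ 0 + n := by
    have := hΦmono.monotone hy1
    rw [show (1 : ℝ) = 0 + 1 by ring, hΦ1] at this
    linarith
  set z := (Φ y - Φ 0) / ε with hzdef
  have hz0 : 0 ≤ z := div_nonneg (by linarith) hε.le
  set i := ⌊z⌋₊ with hidef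
  have hiM : i ≤ M := by
    have h1 : (i : ℝ) ≤ z := Nat.floor_le hz0
    have h2 : z ≤ (n : ℝ) / ε := by
      rw [hzdef]
      gcongr
      linarith
    have h3 : ((n : ℝ) / ε) ≤ (M : ℝ) := Nat.le_ceil _
    have : (i : ℝ) ≤ (M : ℝ) := by linarith
    exact_mod_cast this
  have hlow : Φ 0 + i * ε ≤ Φ y := by
    have h1 : (i : ℝ) ≤ z := Nat.floor_le hz0
    rw [hzdef] at h1
    have := (le_div_iff₀ hε).1 h1
    linarith
  have hhigh : Φ y < Φ 0 + (i + 1) * ε := by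
    have h1 : z < i + 1 := Nat.lt_floor_add_one z
    rw [hzdef] at h1
    have := (div_lt_iff₀ hε).1 h1
    linarith
  have hti : t i ≤ y := by
    have h1 : Φ (t i) ≤ Φ y := by rw [ht]; exact hlow
    exact (hΦmono.le_iff_le).1 h1
  have hmem : dynDist ⇑f n ((t i : ℝ) : Circle1) ((y : ℝ) : Circle1) ≤ ε := by
    refine dynDist_le_of_forall hε.le fun k hk => ?_
    rw [iter_lift f F hFlift, iter_lift f F hFlift]
    refine (circle_dist_le _ _).trans ?_
    have hle : F^[k] (t i) ≤ F^[k] y := (hFmono.iterate k).monotone hti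
    rw [abs_sub_comm, abs_of_nonneg (by linarith)]
    have hsingle : F^[k] y - F^[k] (t i) ≤ Φ y - Φ (t i) := by
      have h2 : ∀ j ∈ Finset.range n, 0 ≤ F^[j] y - F^[j] (t i) := fun j _ => by
        have := (hFmono.iterate j).monotone hti
        linarith
      have h3 := Finset.single_le_sum h2 (Finset.mem_range.2 hk)
      have h4 : ∑ j ∈ Finset.range n, (F^[j] y - F^[j] (t i)) = Φ y - Φ (t i) := by
        rw [Finset.sum_sub_distrib]
      linarith
    have h5 : Φ y - Φ (t i) ≤ ε := by
      rw [ht]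
      have : (i : ℝ) * ε + ε = (i + 1) * ε := by ring
      linarith
    linarith
  rw [hxy]
  refine Set.mem_biUnion ?_ hmem
  exact Finset.mem_image.2 ⟨i, Finset.mem_range.2 (by omega), rfl⟩

/-- Orientation-preserving circle homeomorphism with irrational rotation number,
not conjugate to a rotation: its polynomial entropy equals 1. -/
theorem hpol_circle_homeo_irrational (f : Circle1 ≃ₜ Circle1)
    (F : ℝ → ℝ) (hFcont : Continuous F) (hFmono : StrictMono F)
    (hFlift : ∀ x : ℝ, f ((x : ℝ) : Circle1) = ((F x : ℝ) : Circle1))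
    (ρ : ℝ)
    (hρ : ∀ x : ℝ, Filter.Tendsto (fun n : ℕ => F^[n] x / n) Filter.atTop (nhds ρ))
    (hρnat : Irrational ρ)
    (hnconj : ¬ ConjRotCircle f) :
    hpol (⇑f) = 1 := by
  classical
  have hF1 : ∀ x, F (x + 1) = F x + 1 := lift_map_add_one f F hFcont hFmono hFlift
  have hFbij : Function.Bijective F :=
    ⟨hFmono.injective, surj_of_add_period hFcont hFmono.monotone hF1 one_pos⟩
  have hunitex : ∃ FU : CircleDeg1Liftˣ, ⇑(FU : CircleDeg1Lift) = F := by
    have hu : IsUnit (⟨⟨F, hFmono.monotone⟩, hF1⟩ : CircleDeg1Lift) :=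
      CircleDeg1Lift.isUnit_iff_bijective.2 hFbij
    exact ⟨hu.unit, by rw [IsUnit.unit_spec]; exact rfl⟩
  obtain ⟨FU, hFU⟩ := hunitex
  obtain ⟨x₀, δ, hδ, hsep⟩ :=
    exists_sep f F hFcont hFmono hFlift hF1 FU hFU ρ (hρ 0) hρnat hnconj
  set P : ℕ → Circle1 := fun k =>
    ((((FU ^ (-(k : ℤ)) : CircleDeg1Liftˣ) : CircleDeg1Lift) x₀ : ℝ) : Circle1) with hPdef
  have hiterP : ∀ j k : ℕ, (⇑f)^[j] (P k) =
      ((((FU ^ ((j : ℤ) - k) : CircleDeg1Liftˣ) : CircleDeg1Lift) x₀ : ℝ) : Circle1) := by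
    intro j k
    simp only [hPdef]
    rw [iter_lift f F hFlift]
    congr 1
    have h1 : F^[j] = ⇑((FU : CircleDeg1Lift) ^ j) := by rw [CircleDeg1Lift.coe_pow, hFU]
    have h2 : (FU : CircleDeg1Lift) ^ j = ((FU ^ (j : ℤ) : CircleDeg1Liftˣ) : CircleDeg1Lift) := by
      rw [zpow_natCast, Units.val_pow_eq_pow_val]
    rw [h1, h2, ← CircleDeg1Lift.mul_apply, ← Units.val_mul, ← zpow_add, ← sub_eq_add_neg]
  have hsepP : ∀ j k : ℕ, j < k → δ ≤ dist ((⇑f)^[j] (P j)) ((⇑f)^[j] (P k)) := by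
    intro j k hjk
    rw [hiterP j j, hiterP j k]
    have h0 : ((j : ℤ) - j) = 0 := by ring
    rw [h0]
    have h1 : ((FU ^ (0 : ℤ) : CircleDeg1Liftˣ) : CircleDeg1Lift) x₀ = x₀ := by simp
    rw [h1]
    exact hsep ((j : ℤ) - k) (by omega)
  have hcover : ∀ n : ℕ, 1 ≤ n → ∀ ε : ℝ, 0 < ε →
      coverNum ⇑f n Set.univ ε ≤ ⌈(n : ℝ) / ε⌉₊ + 1 ∧ 1 ≤ coverNum ⇑f n Set.univ ε := by
    intro n hn ε hε
    obtain ⟨s, hsc, hscov⟩ := exists_cover f F hFcont hFmono hFlift hF1 hn hε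
    have hne : Set.Nonempty {m : ℕ | ∃ s : Finset Circle1, s.card = m ∧
        Set.univ ⊆ ⋃ c ∈ s, {y : Circle1 | dynDist ⇑f n c y ≤ ε}} :=
      ⟨s.card, s, rfl, hscov⟩
    have hmem0 : s.card ∈ {m : ℕ | ∃ s : Finset Circle1, s.card = m ∧
        Set.univ ⊆ ⋃ c ∈ s, {y : Circle1 | dynDist ⇑f n c y ≤ ε}} := ⟨s, rfl, hscov⟩
    have hub : coverNum ⇑f n Set.univ ε ≤ ⌈(n : ℝ) / ε⌉₊ + 1 := by
      rw [coverNum_eq]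
      exact (Nat.sInf_le hmem0).trans hsc
    refine ⟨hub, ?_⟩
    by_contra h
    push_neg at h
    have h0 : coverNum ⇑f n Set.univ ε = 0 := by omega
    rw [coverNum_eq] at h0
    have hmem := Nat.sInf_mem hne
    rw [h0] at hmem
    obtain ⟨s0, hs0c, hs0cov⟩ := hmem
    rw [Finset.card_eq_zero] at hs0c
    subst hs0c
    have := hs0cov (Set.mem_univ (0 : Circle1))
    simp at this
  have hlower : ∀ n : ℕ, 1 ≤ n → ∀ ε : ℝ, 0 < ε → 2 * ε < δ →
      n ≤ coverNum ⇑f n Set.univ ε := by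
    intro n hn ε hε hεδ
    obtain ⟨s, hsc, hscov⟩ := exists_cover f F hFcont hFmono hFlift hF1 hn hε
    have hne : Set.Nonempty {m : ℕ | ∃ s : Finset Circle1, s.card = m ∧
        Set.univ ⊆ ⋃ c ∈ s, {y : Circle1 | dynDist ⇑f n c y ≤ ε}} :=
      ⟨s.card, s, rfl, hscov⟩
    have hmem := Nat.sInf_mem hne
    obtain ⟨s0, hs0c, hs0cov⟩ := hmem
    by_contra hcon
    push_neg at hcon
    have hch : ∀ k : ℕ, ∃ c : Circle1, c ∈ s0 ∧ dynDist ⇑f n c (P k) ≤ ε := by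
      intro k
      have h1 := hs0cov (Set.mem_univ (P k))
      rw [Set.mem_iUnion₂] at h1
      obtain ⟨c, hc, hcd⟩ := h1
      exact ⟨c, hc, hcd⟩
    choose g hg1 hg2 using hch
    have hcard : s0.card < (Finset.range n).card := by
      rw [Finset.card_range, hs0c, ← coverNum_eq]
      exact hcon
    obtain ⟨j, hj, k, hk, hjk, hgjk⟩ :=
      Finset.exists_ne_map_eq_of_card_lt_of_maps_to hcard (fun k _ => hg1 k)
    have htri : dynDist ⇑f n (P j) (P k) ≤ 2 * ε := by
      have h1 := hg2 j
      have h2 := hg2 k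
      rw [hgjk] at h1
      calc dynDist ⇑f n (P j) (P k)
          ≤ dynDist ⇑f n (P j) (g k) + dynDist ⇑f n (g k) (P k) :=
            dynDist_triangle ⇑f n (P j) (g k) (P k)
      _ ≤ ε + ε := add_le_add (by rw [dynDist_comm]; exact h1) h2
      _ = 2 * ε := by ring
    rcases hjk.lt_or_gt with h | h
    · have h1 := (hsepP j k h).trans (dist_le_dynDist (Finset.mem_range.1 hj) (P j) (P k))
      linarith
    · have h1 := (hsepP k j h).trans (dist_le_dynDist (Finset.mem_range.1 hk) (P k) (P j))
      rw [dynDist_comm] at h1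
      linarith
  -- limsup computations
  rw [hpol, hpolOn]
  have hupper : ∀ ε : {e : ℝ // 0 < e}, Filter.atTop.limsup
      (fun n : ℕ => ((Real.log (coverNum ⇑f n Set.univ ε.1) / Real.log n : ℝ) : EReal))
      ≤ (1 : EReal) := by
    rintro ⟨ε, hε⟩
    set C : ℝ := 1 / ε + 2 with hC
    have hCpos : (0 : ℝ) < C := by positivity
    have hC1 : (1 : ℝ) ≤ C := by
      have : (0 : ℝ) < 1 / ε := by positivity
      rw [hC]; linarith
    set v : ℕ → ℝ := fun n => 1 + Real.log C / Real.log n with hv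
    have hvt : Filter.Tendsto v Filter.atTop (nhds 1) := by
      have h1 : Filter.Tendsto (fun n : ℕ => Real.log n) Filter.atTop Filter.atTop :=
        Real.tendsto_log_atTop.comp tendsto_natCast_atTop_atTop
      have h2 := h1.inv_tendsto_atTop
      have h3 : Filter.Tendsto (fun n : ℕ => Real.log C * (Real.log n)⁻¹)
          Filter.atTop (nhds (Real.log C * 0)) := tendsto_const_nhds.mul h2
      rw [mul_zero] at h3
      have h4 : Filter.Tendsto (fun n : ℕ => 1 + Real.log C * (Real.log n)⁻¹)
          Filter.atTop (nhds (1 + 0)) := tendsto_const_nhds.add h3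
      rw [add_zero] at h4
      have he : v = fun n : ℕ => 1 + Real.log C * (Real.log n)⁻¹ := by
        funext n
        rw [hv]
        simp [div_eq_mul_inv]
      rw [he]
      exact h4
    have hlimv : Filter.atTop.limsup (fun n : ℕ => ((v n : ℝ) : EReal)) = (1 : EReal) := by
      have h5 : Filter.Tendsto (fun n : ℕ => ((v n : ℝ) : EReal)) Filter.atTop
          (nhds ((1 : ℝ) : EReal)) := EReal.tendsto_coe.2 hvt
      rw [show ((1 : ℝ) : EReal) = (1 : EReal) from rfl] at h5
      exact h5.limsup_eq
    refine le_trans (Filter.limsup_le_limsup ?_) (le_of_eq hlimv)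
    filter_upwards [Filter.eventually_ge_atTop 2] with n hn2
    have hn1 : 1 ≤ n := by omega
    have hnR : (1 : ℝ) < n := by exact_mod_cast hn2
    have hlogn : 0 < Real.log n := Real.log_pos hnR
    have hcovub := (hcover n hn1 ε hε).1
    have hcovlb := (hcover n hn1 ε hε).2
    have hcovpos : (0 : ℝ) < (coverNum ⇑f n Set.univ ε : ℝ) := by exact_mod_cast hcovlb
    have hceil : (⌈(n : ℝ) / ε⌉₊ : ℝ) + 1 ≤ (n : ℝ) * C := by
      have h6 := Nat.ceil_lt_add_one (a := (n : ℝ) / ε) (by positivity)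
      have hn1R : (1 : ℝ) ≤ n := by exact_mod_cast hn1
      have h7 : (n : ℝ) / ε = (n : ℝ) * (1 / ε) := by ring
      have h8 : (2 : ℝ) ≤ 2 * n := by linarith
      rw [hC]
      have h9 : (n : ℝ) * (1 / ε + 2) = (n : ℝ) * (1 / ε) + 2 * n := by ring
      linarith [h6, h7, h8, h9]
    have hcovR : (coverNum ⇑f n Set.univ ε : ℝ) ≤ (n : ℝ) * C := by
      have h9 : (coverNum ⇑f n Set.univ ε : ℝ) ≤ ((⌈(n : ℝ) / ε⌉₊ + 1 : ℕ) : ℝ) := by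
        exact_mod_cast hcovub
      push_cast at h9
      exact le_trans h9 hceil
    have hlogle : Real.log (coverNum ⇑f n Set.univ ε) ≤ Real.log n + Real.log C := by
      have h10 : Real.log (coverNum ⇑f n Set.univ ε) ≤ Real.log ((n : ℝ) * C) :=
        (Real.log_le_log_iff hcovpos (by positivity)).2 hcovR
      rwa [Real.log_mul (by positivity) (ne_of_gt hCpos)] at h10
    have hfinal : Real.log (coverNum ⇑f n Set.univ ε) / Real.log n ≤ v n := by
      have h11 : Real.log (coverNum ⇑f n Set.univ ε) / Real.log n
          ≤ (Real.log n + Real.log C) / Real.log n := by gcongr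
      have h12 : (Real.log n + Real.log C) / Real.log n = v n := by
        rw [hv]
        field_simp
      linarith
    exact EReal.coe_le_coe_iff.2 hfinal
  refine le_antisymm (iSup_le hupper) ?_
  have hε₀ : (0 : ℝ) < δ / 4 := by linarith
  have h2ε₀ : 2 * (δ / 4) < δ := by linarith
  have hlow1 : (1 : EReal) ≤ Filter.atTop.limsup
      (fun n : ℕ => ((Real.log (coverNum ⇑f n Set.univ (δ / 4)) / Real.log n : ℝ) : EReal)) := by
    have hconst : Filter.atTop.limsup (fun _ : ℕ => (1 : EReal)) = (1 : EReal) :=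
      Filter.limsup_const (1 : EReal)
    rw [← hconst]
    refine Filter.limsup_le_limsup ?_
    filter_upwards [Filter.eventually_ge_atTop 2] with n hn2
    have hn1 : 1 ≤ n := by omega
    have hnR : (1 : ℝ) < n := by exact_mod_cast hn2
    have hlogn : 0 < Real.log n := Real.log_pos hnR
    have hcovge := hlower n hn1 (δ / 4) hε₀ h2ε₀
    have hratio : (1 : ℝ) ≤ Real.log (coverNum ⇑f n Set.univ (δ / 4)) / Real.log n := by
      rw [le_div_iff₀ hlogn, one_mul]
      refine (Real.log_le_log_iff (by positivity) ?_).2 ?_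
      · have : (0 : ℝ) < n := by linarith
        have h13 : (n : ℝ) ≤ (coverNum ⇑f n Set.univ (δ / 4) : ℝ) := by exact_mod_cast hcovge
        linarith
      · exact_mod_cast hcovge
    calc (1 : EReal) = ((1 : ℝ) : EReal) := rfl
    _ ≤ _ := EReal.coe_le_coe_iff.2 hratio
  exact le_trans hlow1 (le_iSup_of_le ⟨δ / 4, hε₀⟩ le_rfl)
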